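/- arXiv:math/0209155 — 2 statements merged into one kernel-verified Lean document; each statement's English description precedes it below -/
import Mathlib

section
/- Let G be the direct limit of the system ℤ² → ℤ² → ⋯ where each map is given by the matrix M = [[1,1],[1,0]]. Then G is isomorphic as an abelian group to the subgroup ℤ + ℤ·((√5-1)/2) of ℝ. -/
/-- The transition maps of the golden-mean system: multiplication by the
matrix `M = [[1,1],[1,0]]` repeated `j - i` times. -/
def goldenMap (i j : ℕ) (_ : i ≤ j) : (Fin 2 → ℤ) →+ (Fin 2 → ℤ) :=
  (Matrix.mulVecLin ((!![1, 1; 1, 0] : Matrix (Fin 2) (Fin 2) ℤ) ^ (j - i))).toAddMonoidHom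

noncomputable section GoldenAux

local notation "α" => (Real.sqrt 5 - 1) / 2
local notation "φ" => (Real.sqrt 5 + 1) / 2

lemma golden_h5 : Real.sqrt 5 * Real.sqrt 5 = 5 := Real.mul_self_sqrt (by norm_num)

lemma golden_hαφ : α * φ = 1 := by nlinarith [golden_h5]

lemma golden_sqrt5_pos : (1:ℝ) < Real.sqrt 5 := by
  nlinarith [golden_h5, Real.sqrt_nonneg 5]

lemma golden_irr : Irrational (Real.sqrt 5) := by
  have h : Irrational (Real.sqrt ((5:ℕ):ℝ)) :=
    (by norm_num : Nat.Prime 5).irrational_sqrt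
  simpa using h

/-- linear form v ↦ v0·φ + v1 -/
def ell : (Fin 2 → ℤ) →+ ℝ :=
  AddMonoidHom.mk' (fun v => (v 0 : ℝ) * φ + (v 1 : ℝ))
    (by intro a b; simp only [Pi.add_apply]; push_cast; ring)

lemma ell_M (v : Fin 2 → ℤ) :
    ell ((!![1, 1; 1, 0] : Matrix (Fin 2) (Fin 2) ℤ).mulVec v) = φ * ell v := by
  simp only [ell, AddMonoidHom.mk'_apply, Matrix.mulVec, dotProduct,
    Fin.sum_univ_two, Matrix.cons_val', Matrix.cons_val_zero, Matrix.cons_val_one,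
    Matrix.head_cons, Matrix.cons_val_fin_one, Matrix.head_fin_const, Matrix.of_apply]
  push_cast
  linear_combination (-(v 0 : ℝ)/4) * golden_h5

lemma ell_Mpow (k : ℕ) (v : Fin 2 → ℤ) :
    ell (((!![1, 1; 1, 0] : Matrix (Fin 2) (Fin 2) ℤ) ^ k).mulVec v) = φ ^ k * ell v := by
  induction k generalizing v with
  | zero => simp
  | succ k ih =>
    rw [pow_succ, ← Matrix.mulVec_mulVec, ih, ell_M, pow_succ]
    ring

/-- the compatible family of maps to ℝ -/
def gg (i : ℕ) : (Fin 2 → ℤ) →+ ℝ :=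
  (AddMonoidHom.mk' (fun x : ℝ => α ^ i * x) (fun a b => mul_add _ a b)).comp ell

lemma gg_apply (i : ℕ) (v : Fin 2 → ℤ) : gg i v = α ^ i * ell v := rfl

lemma golden_compat : ∀ (i j : ℕ) (hij : i ≤ j) (v : Fin 2 → ℤ),
    gg j (goldenMap i j hij v) = gg i v := by
  intro i j hij v
  obtain ⟨k, rfl⟩ := Nat.exists_eq_add_of_le hij
  have hk : i + k - i = k := by omega
  have h1 : (α * φ) ^ k = 1 := by rw [golden_hαφ, one_pow]
  simp only [goldenMap, hk, gg_apply, LinearMap.toAddMonoidHom_coe,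
    Matrix.mulVecLin_apply, ell_Mpow]
  calc α ^ (i + k) * (φ ^ k * ell v) = α ^ i * ((α * φ) ^ k) * ell v := by
        rw [mul_pow, pow_add]; ring
    _ = α ^ i * ell v := by rw [h1, mul_one]

lemma ell_eq_zero {v : Fin 2 → ℤ} (h : ell v = 0) : v = 0 := by
  have h' : (v 0 : ℝ) * φ + (v 1 : ℝ) = 0 := h
  by_cases h0 : v 0 = 0
  · have h1 : v 1 = 0 := by
      have : ((v 1 : ℤ) : ℝ) = 0 := by rw [h0] at h'; push_cast at h'; linarith
      exact_mod_cast this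
    funext i; fin_cases i <;> simp [h0, h1]
  · exfalso
    apply golden_irr
    refine ⟨(((-(v 0) - 2 * v 1 : ℤ) : ℚ) / ((v 0 : ℤ) : ℚ)), ?_⟩
    have hv0 : ((v 0 : ℤ) : ℝ) ≠ 0 := by exact_mod_cast h0
    push_cast
    field_simp
    linarith

lemma alpha_pow_mul (i : ℕ) : ∀ m n : ℤ, ∃ m' n' : ℤ,
    α ^ i * ((m : ℝ) + (n : ℝ) * α) = (m' : ℝ) + (n' : ℝ) * α := by
  induction i with
  | zero => intro m n; exact ⟨m, n, by rw [pow_zero, one_mul]⟩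
  | succ i ih =>
    intro m n
    have key : α * ((m : ℝ) + (n : ℝ) * α) = ((n : ℤ) : ℝ) + ((m - n : ℤ) : ℝ) * α := by
      push_cast
      linear_combination ((n : ℝ)/4) * golden_h5
    obtain ⟨m', n', h⟩ := ih n (m - n)
    exact ⟨m', n', by rw [pow_succ, mul_assoc, key, h]⟩

lemma golden_closure_coe :
    (AddSubgroup.closure ({1, α} : Set ℝ) : Set ℝ) =
      {x : ℝ | ∃ m n : ℤ, x = (m : ℝ) + (n : ℝ) * α} := by
  ext x
  simp only [SetLike.mem_coe, AddSubgroup.mem_closure_pair, Set.mem_setOf_eq,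
    zsmul_eq_mul, mul_one]
  constructor
  · rintro ⟨m, n, h⟩; exact ⟨m, n, h.symm⟩
  · rintro ⟨m, n, h⟩; exact ⟨m, n, h.symm⟩

end GoldenAux

theorem golden_direct_limit_iso :
    Nonempty
      (AddCommGroup.DirectLimit (fun _ : ℕ => Fin 2 → ℤ) goldenMap ≃+
        AddSubgroup.closure ({1, (Real.sqrt 5 - 1) / 2} : Set ℝ)) ∧
    (AddSubgroup.closure ({1, (Real.sqrt 5 - 1) / 2} : Set ℝ) : Set ℝ) =
      {x : ℝ | ∃ m n : ℤ, x = (m : ℝ) + (n : ℝ) * ((Real.sqrt 5 - 1) / 2)} := by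
  set α := (Real.sqrt 5 - 1) / 2 with hα
  refine ⟨?_, golden_closure_coe⟩
  set G := AddCommGroup.DirectLimit (fun _ : ℕ => Fin 2 → ℤ) goldenMap with hG
  let F : G →+ ℝ :=
    AddCommGroup.DirectLimit.lift (fun _ : ℕ => Fin 2 → ℤ) goldenMap ℝ gg golden_compat
  have hF_of : ∀ (i : ℕ) (v : Fin 2 → ℤ),
      F (AddCommGroup.DirectLimit.of (fun _ : ℕ => Fin 2 → ℤ) goldenMap i v) = gg i v :=
    fun i v => AddCommGroup.DirectLimit.lift_of ℝ gg golden_compat i v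
  have hexists : ∀ x : G, ∃ i v,
      x = AddCommGroup.DirectLimit.of (fun _ : ℕ => Fin 2 → ℤ) goldenMap i v := by
    intro x
    refine AddCommGroup.DirectLimit.induction_on x ?_
    intro i v; exact ⟨i, v, rfl⟩
  have hαpos : (0:ℝ) < α := by rw [hα]; linarith [golden_sqrt5_pos]
  have hinj : Function.Injective F := by
    rw [injective_iff_map_eq_zero]
    intro x hx
    obtain ⟨i, v, rfl⟩ := hexists x
    rw [hF_of, gg_apply] at hx
    have hv : ell v = 0 := by
      rcases mul_eq_zero.mp hx with h | h
      · exact absurd h (pow_ne_zero _ (ne_of_gt hαpos))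
      · exact h
    rw [ell_eq_zero hv, map_zero]
  have hell : ∀ v : Fin 2 → ℤ,
      ell v = ((v 0 + v 1 : ℤ) : ℝ) + ((v 0 : ℤ) : ℝ) * α := by
    intro v
    show (v 0 : ℝ) * ((Real.sqrt 5 + 1)/2) + (v 1 : ℝ) = _
    push_cast
    ring
  have hrange : F.range = AddSubgroup.closure ({1, α} : Set ℝ) := by
    apply le_antisymm
    · rintro x ⟨y, rfl⟩
      obtain ⟨i, v, rfl⟩ := hexists y
      rw [hF_of, gg_apply, hell v]
      obtain ⟨m', n', h⟩ := alpha_pow_mul i (v 0 + v 1) (v 0)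
      rw [h, AddSubgroup.mem_closure_pair]
      exact ⟨m', n', by rw [zsmul_eq_mul, zsmul_eq_mul, mul_one]⟩
    · rw [AddSubgroup.closure_le]
      rintro x (rfl | rfl)
      · refine ⟨AddCommGroup.DirectLimit.of (fun _ : ℕ => Fin 2 → ℤ) goldenMap 0 ![0, 1], ?_⟩
        rw [hF_of, gg_apply, hell]
        norm_num
      · refine ⟨AddCommGroup.DirectLimit.of (fun _ : ℕ => Fin 2 → ℤ) goldenMap 0 ![1, -1], ?_⟩
        rw [hF_of, gg_apply, hell]
        norm_num
  exact ⟨(AddMonoidHom.ofInjective hinj).trans (AddEquiv.addSubgroupCongr hrange)⟩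
end

section
/- The Fibonacci word, defined as the fixed point of the substitution a ↦ ab, b ↦ a, is not eventually periodic. -/
def fibSub : Bool → List Bool := fun x => if x then [true, false] else [true]

def IsFibWord (w : ℕ → Bool) : Prop :=
  w 0 = true ∧
    ∀ n k : ℕ, ∀ h : k < (((List.range n).map w).flatMap fibSub).length,
      (((List.range n).map w).flatMap fibSub).get ⟨k, h⟩ = w k

lemma fib_flatMap_length (l : List Bool) :
    (l.flatMap fibSub).length = l.length + l.count true := by
  induction l with
  | nil => simp
  | cons a l ih => cases a <;> simp [fibSub, ih, List.count_cons] <;> omega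

lemma fib_flatMap_count (l : List Bool) : (l.flatMap fibSub).count true = l.length := by
  induction l with
  | nil => simp
  | cons a l ih => cases a <;> simp [fibSub, ih, List.count_cons]

theorem fibonacci_word_not_eventually_periodic (w : ℕ → Bool) (hw : IsFibWord w) :
    ¬ ∃ N p : ℕ, 0 < p ∧ ∀ k ≥ N, w (k + p) = w k := by
  rintro ⟨N, p, hp, hper⟩
  set A : ℕ → ℕ := fun n => (((List.range n).map w).count true) with hA
  have hstep : ∀ n, A (n + 1) = A n + (if w n then 1 else 0) := by
    intro n
    simp [hA, List.range_succ, List.count_append, List.count_cons]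
  have hmono : Monotone A := monotone_nat_of_le_succ (fun n => by rw [hstep]; omega)
  -- key identity
  have hkey : ∀ n, A (n + A n) = n := by
    intro n
    set P := ((List.range n).map w).flatMap fibSub with hP
    have hlen : P.length = n + A n := by
      rw [hP, fib_flatMap_length]; simp [hA]
    have hPeq : P = (List.range (n + A n)).map w := by
      apply List.ext_get
      · simp [hlen]
      · intro k h1 h2
        rw [hw.2 n k h1]
        simp
    have : P.count true = n := by rw [hP, fib_flatMap_count]; simp
    rw [hPeq] at this
    simpa [hA] using this
  -- period count
  set c : ℕ := A (N + p) - A N with hc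
  have hcc : A (N + p) = A N + c := by
    have := hmono (Nat.le_add_right N p)
    omega
  have hshift : ∀ m, N ≤ m → A (m + p) = A m + c := by
    intro m hm
    induction m, hm using Nat.le_induction with
    | base => exact hcc
    | succ m hm ih =>
      have h1 : A (m + 1 + p) = A (m + p) + (if w (m + p) then 1 else 0) := by
        rw [show m + 1 + p = (m + p) + 1 by ring, hstep]
      rw [h1, hstep, hper m hm, ih]; ring
  have hmul : ∀ m, N ≤ m → ∀ k, A (m + k * p) = A m + k * c := by
    intro m hm k
    induction k with
    | zero => simp
    | succ k ih =>
      have : m + (k + 1) * p = (m + k * p) + p := by ring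
      rw [this, hshift _ (le_trans hm (Nat.le_add_right _ _)), ih]; ring
  -- derive (p+c)*c = p*p
  have e1 : A (N + A N) = N := hkey N
  have e2 : A (N + p * p) = A N + p * c := hmul N le_rfl p
  have e3 : A ((N + p * p) + A (N + p * p)) = N + p * p := hkey (N + p * p)
  have e4 : (N + p * p) + A (N + p * p) = (N + A N) + (p + c) * p := by
    rw [e2]; ring
  rw [e4, hmul (N + A N) (Nat.le_add_right _ _) (p + c), e1] at e3
  have e5 : (p + c) * c = p * p := by omega
  -- no solutions in ℕ with p > 0
  rcases Nat.eq_zero_or_pos c with hc0 | hc0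
  · simp [hc0] at e5; omega
  have e6 : (2 * c + p) ^ 2 = 5 * p ^ 2 := by nlinarith [e5]
  -- irrationality of sqrt 5
  have h5 : Irrational (Real.sqrt 5) := by
    have := Nat.Prime.irrational_sqrt (p := 5) (by norm_num)
    simpa using this
  have hsq : Real.sqrt 5 = ((2 * c + p : ℕ) : ℝ) / ((p : ℕ) : ℝ) := by
    have hp' : (0:ℝ) < (p:ℝ) := by exact_mod_cast hp
    rw [show (5:ℝ) = (((2 * c + p : ℕ) : ℝ) / ((p : ℕ) : ℝ)) ^ 2 by
      field_simp
      exact_mod_cast e6.symm]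
    exact Real.sqrt_sq (by positivity)
  apply Rat.not_irrational (((2 * c + p : ℕ) : ℚ) / ((p : ℕ) : ℚ))
  have heq : ((((2 * c + p : ℕ) : ℚ) / ((p : ℕ) : ℚ) : ℚ) : ℝ) = Real.sqrt 5 := by
    rw [hsq]; push_cast; ring
  rw [heq]; exact h5
end
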